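/- Let d be a positive integer, let C be a d×d complex matrix with real encoding C̃ = fromBlocks(Re(C), −Im(C), Im(C), Re(C)), and let ψ, ψ' ∈ ℂ^d be vectors all of whose entries are real. Let u be the block vector on Fin d ⊕ Fin d with top block ψ' and bottom block 0 (i.e. u = |0⟩ ⊗ ψ'). Then the marginal over the encoding qubit reproduces the original transition probability: |⟨w₀, C̃ u⟩|² + |⟨w₁, C̃ u⟩|² = |⟨ψ, C ψ'⟩|², where w₀ is the block vector with top block ψ and bottom block 0, and w₁ is the block vector with top block 0 and bottom block ψ. -/

import Mathlib

/- STATEMENT 11: The marginal over the encoding qubit of the real encoding C̃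
reproduces the original transition probability:
|⟨w₀, C̃ u⟩|² + |⟨w₁, C̃ u⟩|² = |⟨ψ, C ψ'⟩|² for real-valued ψ, ψ', where
u = |0⟩⊗ψ', w₀ = |0⟩⊗ψ, w₁ = |1⟩⊗ψ as block vectors. -/

open Complex Matrix

noncomputable section

/-- The inner product `⟨u,v⟩ = Σᵢ conj(u(i))·v(i)`. -/
def inn {ι : Type*} [Fintype ι] (u v : ι → ℂ) : ℂ :=
  ∑ i, (starRingEnd ℂ) (u i) * v i

/-- Entrywise real part of a complex matrix, viewed as a complex matrix. -/
def reM {d : ℕ} (C : Matrix (Fin d) (Fin d) ℂ) : Matrix (Fin d) (Fin d) ℂ :=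
  Matrix.of fun i j => ((C i j).re : ℂ)

/-- Entrywise imaginary part of a complex matrix, viewed as a complex matrix. -/
def imM {d : ℕ} (C : Matrix (Fin d) (Fin d) ℂ) : Matrix (Fin d) (Fin d) ℂ :=
  Matrix.of fun i j => ((C i j).im : ℂ)

/-- The real encoding `C̃ = fromBlocks(Re C, −Im C, Im C, Re C)`. -/
def enc {d : ℕ} (C : Matrix (Fin d) (Fin d) ℂ) :
    Matrix (Fin d ⊕ Fin d) (Fin d ⊕ Fin d) ℂ :=
  Matrix.fromBlocks (reM C) (-imM C) (imM C) (reM C)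

theorem encoding_marginal_probability (d : ℕ) (hd : 0 < d)
    (C : Matrix (Fin d) (Fin d) ℂ) (ψ ψ' : Fin d → ℂ)
    (hψ : ∀ i, (ψ i).im = 0) (hψ' : ∀ i, (ψ' i).im = 0) :
    ‖inn (Sum.elim ψ (fun _ => 0)) ((enc C).mulVec (Sum.elim ψ' fun _ => 0))‖ ^ 2
      + ‖inn (Sum.elim (fun _ => 0) ψ) ((enc C).mulVec (Sum.elim ψ' fun _ => 0))‖ ^ 2
      = ‖inn ψ (C.mulVec ψ')‖ ^ 2 := by
  set A : ℝ := ∑ i, ∑ j, (ψ i).re * ((C i j).re * (ψ' j).re) with hA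
  set B : ℝ := ∑ i, ∑ j, (ψ i).re * ((C i j).im * (ψ' j).re) with hB
  have hψr : ∀ i, ψ i = ((ψ i).re : ℂ) := fun i => by
    rw [Complex.ext_iff]; simp [hψ i]
  have hψ'r : ∀ i, ψ' i = ((ψ' i).re : ℂ) := fun i => by
    rw [Complex.ext_iff]; simp [hψ' i]
  have h0 : inn (Sum.elim ψ (fun _ => 0)) ((enc C).mulVec (Sum.elim ψ' fun _ => 0)) = (A : ℂ) := by
    simp only [inn, enc, reM, imM, mulVec, dotProduct, Fintype.sum_sum_type,
      Sum.elim_inl, Sum.elim_inr, fromBlocks_apply₁₁, fromBlocks_apply₂₂,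
      of_apply, mul_zero, Finset.sum_const_zero, add_zero, map_zero, zero_mul, hA]
    push_cast
    refine Finset.sum_congr rfl fun i _ => ?_
    rw [Finset.mul_sum]
    refine Finset.sum_congr rfl fun j _ => ?_
    rw [hψr i, hψ'r j]
    simp [Complex.conj_ofReal]
  have h1 : inn (Sum.elim (fun _ => 0) ψ) ((enc C).mulVec (Sum.elim ψ' fun _ => 0)) = (B : ℂ) := by
    simp only [inn, enc, reM, imM, mulVec, dotProduct, Fintype.sum_sum_type,
      Sum.elim_inl, Sum.elim_inr, fromBlocks_apply₂₁, fromBlocks_apply₂₂,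
      of_apply, mul_zero, Finset.sum_const_zero, add_zero, map_zero, zero_mul,
      Finset.sum_const_zero, zero_add, hB]
    push_cast
    refine Finset.sum_congr rfl fun i _ => ?_
    rw [Finset.mul_sum]
    refine Finset.sum_congr rfl fun j _ => ?_
    rw [hψr i, hψ'r j]
    simp [Complex.conj_ofReal]
  have h2 : inn ψ (C.mulVec ψ') = (A : ℂ) + (B : ℂ) * I := by
    simp only [inn, mulVec, dotProduct, hA, hB]
    push_cast
    rw [Finset.sum_mul, ← Finset.sum_add_distrib]
    refine Finset.sum_congr rfl fun i _ => ?_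
    rw [Finset.sum_mul, ← Finset.sum_add_distrib, Finset.mul_sum]
    refine Finset.sum_congr rfl fun j _ => ?_
    rw [hψr i, hψ'r j, Complex.conj_ofReal]
    nth_rewrite 1 [← Complex.re_add_im (C i j)]
    simp only [Complex.ofReal_re]
    ring
  rw [h0, h1, h2, Complex.sq_norm, Complex.sq_norm, Complex.sq_norm,
    Complex.normSq_apply, Complex.normSq_apply, Complex.normSq_apply]
  push_cast
  simp


end
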